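/- Let 𝒜 = (Q, A, δ, λ) be an invertible Mealy automaton such that the underlying DFA is nilpotent with sink s. Then the group G(𝒜) generated by the transformations {𝒜_q : q ∈ Q} acting on the rooted tree A* is finite. -/

import Mathlib

/-- The action of a DFA transition function on words. -/
def dfaRun {Q A : Type*} (δ : Q → A → Q) (q : Q) (u : List A) : Q := u.foldl δ q

/-- The sequential transformation of `A*` induced by a state of a Mealy automaton. -/
def mealyMap {Q A : Type*} (δ : Q → A → Q) (lam : Q → A → A) : Q → List A → List A
  | _, [] => []
  | q, a :: u => lam q a :: mealyMap δ lam (δ q a) u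

lemma mealyMap_length {Q A : Type*} (δ : Q → A → Q) (lam : Q → A → A) :
    ∀ (u : List A) (q : Q), (mealyMap δ lam q u).length = u.length
  | [], _ => rfl
  | a :: u, q => by simp [mealyMap, mealyMap_length δ lam u]

lemma mealyMap_append {Q A : Type*} (δ : Q → A → Q) (lam : Q → A → A) :
    ∀ (p : List A) (q : Q) (t : List A),
      mealyMap δ lam q (p ++ t) = mealyMap δ lam q p ++ mealyMap δ lam (dfaRun δ q p) t
  | [], _, _ => rfl
  | a :: p, q, t => by
      simp [mealyMap, mealyMap_append δ lam p (δ q a) t, dfaRun]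

lemma mealyMap_sink {Q A : Type*} (δ : Q → A → Q) (lam : Q → A → A) {s : Q}
    (hs : ∀ a, δ s a = s) : ∀ t : List A, mealyMap δ lam s t = t.map (lam s)
  | [] => rfl
  | a :: t => by simp [mealyMap, hs, mealyMap_sink δ lam hs t]

/-- The group generated by an invertible Mealy automaton whose underlying DFA is nilpotent
is finite. Here `e q` is the tree automorphism (permutation of `A*`) induced by state `q`. -/
theorem stmt11 {Q A : Type*} [Fintype Q] [Fintype A] (δ : Q → A → Q) (lam : Q → A → A)
    (hinv : ∀ q, Function.Bijective (lam q))
    (s : Q) (n : ℕ) (hn : 1 ≤ n)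
    (hnilp : ∀ w : List A, n ≤ w.length → ∀ q : Q, dfaRun δ q w = s)
    (e : Q → Equiv.Perm (List A)) (he : ∀ q u, e q u = mealyMap δ lam q u) :
    (Subgroup.closure (Set.range e) : Set (Equiv.Perm (List A))).Finite := by
  rcases isEmpty_or_nonempty A with hA | hA
  · have hsub : Subsingleton (List A) := ⟨fun l l' => by
      cases l with
      | nil => cases l' with
        | nil => rfl
        | cons a _ => exact hA.elim a
      | cons a _ => exact hA.elim a⟩
    exact Set.toFinite _
  · obtain ⟨a₀⟩ := hA
    -- s is a sink
    have hs : ∀ a, δ s a = s := by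
      intro a
      have h1 := hnilp (List.replicate n a₀ ++ [a]) (by simp) s
      have h2 := hnilp (List.replicate n a₀) (by simp) s
      rw [show dfaRun δ s (List.replicate n a₀ ++ [a])
          = δ (dfaRun δ s (List.replicate n a₀)) a from List.foldl_append .., h2] at h1
      exact h1
    set σ : Equiv.Perm A := Equiv.ofBijective (lam s) (hinv s) with hσ
    -- the invariant
    set Good : Equiv.Perm (List A) → Prop := fun g =>
      (∀ u : List A, (g u).length = u.length) ∧
      ∃ τ : Equiv.Perm A, ∀ p t : List A, p.length = n → g (p ++ t) = g p ++ t.map τ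
      with hGood
    have hclos : ∀ g ∈ Subgroup.closure (Set.range e), Good g := by
      intro g hg
      induction hg using Subgroup.closure_induction with
      | mem x hx =>
        obtain ⟨q, rfl⟩ := hx
        constructor
        · intro u; rw [he]; exact mealyMap_length δ lam u q
        · refine ⟨σ, fun p t hp => ?_⟩
          rw [he, he, mealyMap_append]
          have : dfaRun δ q p = s := hnilp p (le_of_eq hp.symm) q
          rw [this, mealyMap_sink δ lam hs]
          rfl
      | one => exact ⟨fun u => rfl, 1, fun p t hp => by simp⟩
      | mul x y hx hy ihx ihy =>
        obtain ⟨hlx, τx, hτx⟩ := ihx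
        obtain ⟨hly, τy, hτy⟩ := ihy
        refine ⟨fun u => by simp [Equiv.Perm.mul_apply, hlx, hly], τx * τy, fun p t hp => ?_⟩
        have hyl : (y p).length = n := by rw [hly, hp]
        simp only [Equiv.Perm.mul_apply, hτy p t hp, hτx (y p) (t.map τy) hyl, List.map_map]
        rfl
      | inv x hx ihx =>
        obtain ⟨hlx, τx, hτx⟩ := ihx
        refine ⟨fun u => ?_, τx⁻¹, fun p t hp => ?_⟩
        · conv_rhs => rw [← Equiv.apply_symm_apply x u]
          rw [Equiv.Perm.inv_def, hlx]
        · have hl : (x⁻¹ p).length = n := by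
            rw [Equiv.Perm.inv_def, ← hp]
            conv_rhs => rw [← Equiv.apply_symm_apply x p]
            rw [hlx]
          apply x.injective
          rw [(Equiv.Perm.inv_eq_iff_eq.mp rfl).symm, hτx _ _ hl, (Equiv.Perm.inv_eq_iff_eq.mp rfl).symm, List.map_map]
          simp [Function.comp_def]
    -- finiteness of the set of Good permutations
    have hfinT : Finite {l : List A // l.length ≤ n} := (List.finite_length_le A n).to_subtype
    set Ψ : (({l : List A // l.length ≤ n} → {l : List A // l.length ≤ n}) × Equiv.Perm A) →
        (List A → List A) := fun fτ u =>
      if h : u.length ≤ n then (fτ.1 ⟨u, h⟩ : List A)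
      else (fτ.1 ⟨u.take n, by simp⟩ : List A) ++ (u.drop n).map fτ.2 with hΨ
    have hGfin : {g : Equiv.Perm (List A) | Good g}.Finite := by
      apply Set.Finite.of_finite_image (f := fun g : Equiv.Perm (List A) => (g : List A → List A))
      · apply Set.Finite.subset (Set.finite_range Ψ)
        rintro _ ⟨g, ⟨hlg, τ, hτ⟩, rfl⟩
        refine ⟨(fun u => ⟨g u, by rw [hlg]; exact u.2⟩, τ), ?_⟩
        funext u
        simp only [hΨ]
        split_ifs with h
        · rfl
        · push_neg at h
          have hu : u = u.take n ++ u.drop n := (List.take_append_drop n u).symm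
          have htl : (u.take n).length = n := by
            rw [List.length_take]; exact min_eq_left h.le
          conv_rhs => rw [hu]
          rw [hτ _ _ htl]
      · exact Equiv.coe_fn_injective.injOn
    exact hGfin.subset (fun g hg => hclos g hg)
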